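/- arXiv:1808.05608 — 2 statements merged into one kernel-verified Lean document; each statement's English description precedes it below -/
import Mathlib

section
/- For every complex s with nonzero real part, real numbers x₀ ≤ x, and complex α with Re(α) > 0, the Riemann–Liouville fractional integral of order α of the function t ↦ e^{st} from x₀ to x equals (e^{sx}/s^α)·P(α, s(x − x₀)), where P(a,z) = (1/Γ(a))·∫₀^z t^{a−1} e^{−t} dt is the regularized lower incomplete gamma function. -/
/-- The regularized lower incomplete gamma function `P(a, z)`, defined by integrating
`t^(a-1) e^(-t)` along the straight segment from `0` to `z` (principal branch powers),
divided by `Γ(a)`. -/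
noncomputable def regLowerIncGamma (a z : ℂ) : ℂ :=
  (∫ s in (0:ℝ)..1, ((s : ℂ) * z) ^ (a - 1) * Complex.exp (-((s : ℂ) * z)) * z) /
    Complex.Gamma a

private lemma ofReal_mul_cpow_aux {r : ℝ} (hr : 0 ≤ r) (s c : ℂ) :
    ((r : ℂ) * s) ^ c = (r : ℂ) ^ c * s ^ c := by
  rcases eq_or_ne c 0 with rfl | hc
  · simp
  rcases hr.eq_or_lt with rfl | hr'
  · simp [Complex.zero_cpow hc]
  rcases eq_or_ne s 0 with rfl | hs0
  · simp [Complex.zero_cpow hc]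
  have hr'' : (r : ℂ) ≠ 0 := Complex.ofReal_ne_zero.mpr hr'.ne'
  rw [Complex.cpow_def_of_ne_zero (mul_ne_zero hr'' hs0),
    Complex.log_ofReal_mul hr' hs0, Complex.ofReal_log hr, add_mul, Complex.exp_add,
    ← Complex.cpow_def_of_ne_zero hr'', ← Complex.cpow_def_of_ne_zero hs0]

theorem frac_int_exp (s : ℂ) (hs : s.re ≠ 0) (x₀ x : ℝ) (hx : x₀ ≤ x)
    (α : ℂ) (hα : 0 < α.re) :
    (1 / Complex.Gamma α) *
        ∫ t in x₀..x, ((x : ℂ) - (t : ℂ)) ^ (α - 1) * Complex.exp (s * t) =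
      Complex.exp (s * x) / s ^ α * regLowerIncGamma α (s * ((x : ℂ) - (x₀ : ℂ))) := by
  have hs0 : s ≠ 0 := fun h => hs (by simp [h])
  rcases hx.eq_or_lt with rfl | hlt
  · simp [regLowerIncGamma, intervalIntegral.integral_same]
  set d : ℝ := x - x₀ with hd_def
  have hd : 0 < d := sub_pos.mpr hlt
  have hcast : ((x : ℂ) - (x₀ : ℂ)) = (d : ℂ) := by push_cast [hd_def]; ring
  have hsα : s ^ α ≠ 0 := by
    intro h
    rw [Complex.cpow_eq_zero_iff] at h
    exact hs0 h.1
  have hG : Complex.Gamma α ≠ 0 := by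
    apply Complex.Gamma_ne_zero
    intro m h
    rw [h] at hα
    simp only [Complex.neg_re, Complex.natCast_re] at hα
    have := Nat.cast_nonneg (α := ℝ) m
    linarith
  -- the common core integral
  set I : ℂ := ∫ u in (0:ℝ)..d, (u : ℂ) ^ (α - 1) * Complex.exp (-(s * u)) with hI
  -- Step 1: the LHS integral equals exp(s x) * I
  have key1 : (∫ t in x₀..x, ((x : ℂ) - (t : ℂ)) ^ (α - 1) * Complex.exp (s * t))
      = Complex.exp (s * x) * I := by
    have h := intervalIntegral.integral_comp_sub_left (a := x₀) (b := x)
      (fun u : ℝ => ((u : ℂ)) ^ (α - 1) * Complex.exp (s * x - s * u)) x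
    have h1 : (∫ t in x₀..x, ((x : ℂ) - (t : ℂ)) ^ (α - 1) * Complex.exp (s * t))
        = ∫ t in x₀..x, ((((x - t : ℝ)) : ℂ)) ^ (α - 1) * Complex.exp (s * x - s * (x - t : ℝ)) := by
      refine intervalIntegral.integral_congr fun t _ => ?_
      push_cast
      rw [show s * (x : ℂ) - s * ((x : ℂ) - (t : ℂ)) = s * t by ring]
    rw [h1, h]
    have h2 : x - x = (0:ℝ) := by ring
    rw [h2, show x - x₀ = d from rfl, hI, ← intervalIntegral.integral_const_mul]
    refine intervalIntegral.integral_congr fun u _ => ?_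
    rw [show s * (x : ℂ) - s * u = s * x + -(s * u) by ring, Complex.exp_add]
    ring
  -- Step 2: the regLowerIncGamma integral equals s ^ α * I
  have key2 : (∫ v in (0:ℝ)..1, ((v : ℂ) * (s * ((x : ℂ) - (x₀ : ℂ)))) ^ (α - 1) *
        Complex.exp (-((v : ℂ) * (s * ((x : ℂ) - (x₀ : ℂ))))) * (s * ((x : ℂ) - (x₀ : ℂ))))
      = s ^ α * I := by
    rw [hcast]
    have step : (∫ v in (0:ℝ)..1, ((v : ℂ) * (s * (d : ℂ))) ^ (α - 1) *
          Complex.exp (-((v : ℂ) * (s * (d : ℂ)))) * (s * (d : ℂ)))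
        = ∫ v in (0:ℝ)..1, (s ^ α * d) *
            (((((d * v : ℝ)) : ℂ)) ^ (α - 1) * Complex.exp (-(s * ((d * v : ℝ) : ℂ)))) := by
      refine intervalIntegral.integral_congr fun v hv => ?_
      have hv0 : 0 ≤ v := by
        rcases Set.mem_uIcc.mp hv with h | h
        · exact h.1
        · linarith [h.1]
      have hvd : (0:ℝ) ≤ v * d := mul_nonneg hv0 hd.le
      have hrw : (v : ℂ) * (s * (d : ℂ)) = ((v * d : ℝ) : ℂ) * s := by push_cast; ring
      have hsplit : s ^ (α - 1) * s = s ^ α := by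
        conv_rhs => rw [show α = (α - 1) + 1 by ring]
        rw [Complex.cpow_add _ _ hs0, Complex.cpow_one]
      rw [hrw, ofReal_mul_cpow_aux hvd, ← hsplit]
      push_cast
      ring
    rw [step, intervalIntegral.integral_const_mul,
      intervalIntegral.integral_comp_mul_left
        (fun u : ℝ => ((u : ℂ)) ^ (α - 1) * Complex.exp (-(s * (u : ℂ)))) hd.ne']
    simp only [mul_zero, mul_one, Complex.real_smul, hI]
    have hdC : (d : ℂ) ≠ 0 := Complex.ofReal_ne_zero.mpr hd.ne'
    push_cast
    field_simp
  rw [key1, regLowerIncGamma, key2]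
  field_simp
end

section
/- For all real ν > 0 and natural n ≥ 1, the quantity (1/π)·Re ∫₀^π (ix)^n e^{iνx} dx − (1/π)·Im ∫₀^∞ (iπ − x)^n e^{(iπ−x)ν} dx equals zero. -/
open MeasureTheory Set Filter Topology

noncomputable def besselAux (c : ℂ) : ℕ → ℂ → ℂ
  | 0, z => Complex.exp (z * c) / c
  | (k+1), z => z ^ (k+1) * Complex.exp (z * c) / c - ((k : ℂ) + 1) / c * besselAux c k z

theorem besselAux_hasDerivAt (c : ℂ) (hc : c ≠ 0) (k : ℕ) (z : ℂ) :
    HasDerivAt (besselAux c k) (z ^ k * Complex.exp (z * c)) z := by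
  induction k generalizing z with
  | zero =>
    have h := (((hasDerivAt_id z).mul_const c).cexp).div_const c
    simp only [id_eq, one_mul, mul_div_cancel_right₀ _ hc] at h
    show HasDerivAt (fun z : ℂ => Complex.exp (z * c) / c) (z ^ 0 * Complex.exp (z * c)) z
    simpa using h
  | succ k ih =>
    have h1 : HasDerivAt (fun z : ℂ => z ^ (k+1) * Complex.exp (z * c) / c)
        (((((k:ℂ)+1) * z ^ k) * Complex.exp (z * c) +
          z ^ (k+1) * (Complex.exp (z * c) * c)) / c) z := by
      have := ((hasDerivAt_pow (k+1) z).mul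
        (((hasDerivAt_id z).mul_const c).cexp)).div_const c
      simpa [Nat.cast_add, Nat.cast_one] using this
    have h2 : HasDerivAt (fun z : ℂ => ((k : ℂ) + 1) / c * besselAux c k z)
        (((k : ℂ) + 1) / c * (z ^ k * Complex.exp (z * c))) z := (ih z).const_mul _
    have h := h1.sub h2
    have heq : ((((k:ℂ)+1) * z ^ k) * Complex.exp (z * c) +
          z ^ (k+1) * (Complex.exp (z * c) * c)) / c -
        ((k : ℂ) + 1) / c * (z ^ k * Complex.exp (z * c)) =
        z ^ (k+1) * Complex.exp (z * c) := by
      field_simp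
      ring
    rw [heq] at h
    exact h

theorem besselAux_zero_real (ν : ℝ) (k : ℕ) : ∃ r : ℝ, besselAux (ν : ℂ) k 0 = (r : ℂ) := by
  induction k with
  | zero =>
    refine ⟨1 / ν, ?_⟩
    show Complex.exp (0 * ν) / ν = _
    push_cast
    simp
  | succ k ih =>
    obtain ⟨r, hr⟩ := ih
    refine ⟨-(((k : ℝ) + 1) / ν * r), ?_⟩
    show (0:ℂ) ^ (k+1) * Complex.exp (0 * ν) / ν - ((k : ℂ) + 1) / ν * besselAux (ν:ℂ) k 0 = _
    rw [hr]
    push_cast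
    ring

theorem bessel_poly_exp_tendsto (ν : ℝ) (hν : 0 < ν) (k : ℕ) :
    Tendsto (fun x : ℝ => (Real.pi + x) ^ k * Real.exp (-(ν * x))) atTop (𝓝 0) := by
  have hpoly : Tendsto (fun x : ℝ => x ^ k * Real.exp (-(ν * x))) atTop (𝓝 0) := by
    have h1 : Tendsto (fun t : ℝ => t ^ k * Real.exp (-t) / ν ^ k) atTop (𝓝 0) := by
      simpa using (Real.tendsto_pow_mul_exp_neg_atTop_nhds_zero k).div_const (ν ^ k)
    have h2 : Tendsto (fun x : ℝ => ν * x) atTop atTop :=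
      tendsto_id.const_mul_atTop hν
    have h3 := h1.comp h2
    refine h3.congr fun x => ?_
    simp only [Function.comp]
    rw [mul_pow]
    have hνk : (ν : ℝ) ^ k ≠ 0 := pow_ne_zero _ hν.ne'
    field_simp
  have h2 : Tendsto (fun x : ℝ => Real.pi + x) atTop atTop :=
    tendsto_atTop_add_const_left _ _ tendsto_id
  have h4 := (hpoly.comp h2).const_mul (Real.exp (ν * Real.pi))
  simp only [Function.comp, mul_zero] at h4
  refine h4.congr fun x => ?_
  rw [← mul_assoc, mul_comm (Real.exp (ν * Real.pi)), mul_assoc, ← Real.exp_add]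
  ring_nf

theorem bessel_norm_le (ν : ℝ) (k : ℕ) {x : ℝ} (hx : 0 ≤ x) :
    ‖(Complex.I * Real.pi - (x : ℂ)) ^ k *
      Complex.exp ((Complex.I * Real.pi - (x : ℂ)) * ν)‖ ≤
      (Real.pi + x) ^ k * Real.exp (-(ν * x)) := by
  rw [norm_mul, norm_pow, Complex.norm_exp]
  have hre : ((Complex.I * Real.pi - (x : ℂ)) * ν).re = -(ν * x) := by
    simp [Complex.mul_re]
    ring
  rw [hre]
  gcongr
  calc ‖Complex.I * (Real.pi : ℂ) - (x : ℂ)‖ ≤ ‖Complex.I * (Real.pi : ℂ)‖ + ‖(x : ℂ)‖ :=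
        norm_sub_le _ _
    _ = Real.pi + x := by
        simp [abs_of_nonneg hx, abs_of_nonneg Real.pi_pos.le]

theorem bessel_tendsto_aux (ν : ℝ) (hν : 0 < ν) (k : ℕ) :
    Tendsto (fun x : ℝ => (Complex.I * Real.pi - (x : ℂ)) ^ k *
      Complex.exp ((Complex.I * Real.pi - (x : ℂ)) * ν)) atTop (𝓝 0) := by
  refine squeeze_zero_norm' ?_ (bessel_poly_exp_tendsto ν hν k)
  filter_upwards [eventually_ge_atTop (0:ℝ)] with x hx
  exact bessel_norm_le ν k hx

theorem besselAux_tendsto (ν : ℝ) (hν : 0 < ν) (k : ℕ) :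
    Tendsto (fun x : ℝ => besselAux (ν : ℂ) k (Complex.I * Real.pi - (x : ℂ)))
      atTop (𝓝 0) := by
  induction k with
  | zero =>
    have := (bessel_tendsto_aux ν hν 0).div_const (ν : ℂ)
    simpa [besselAux] using this
  | succ k ih =>
    have h1 := (bessel_tendsto_aux ν hν (k+1)).div_const (ν : ℂ)
    have h2 := ih.const_mul (((k : ℂ) + 1) / (ν : ℂ))
    have := h1.sub h2
    simpa [besselAux] using this

theorem bessel_integrable_aux (ν : ℝ) (hν : 0 < ν) (k : ℕ) :
    IntegrableOn (fun x : ℝ => (Complex.I * Real.pi - (x : ℂ)) ^ k *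
      Complex.exp ((Complex.I * Real.pi - (x : ℂ)) * ν)) (Ioi 0) := by
  have hg : IntegrableOn (fun x : ℝ => (Real.pi + x) ^ k * Real.exp (-(ν * x))) (Ioi 0) := by
    apply integrable_of_isBigO_exp_neg (half_pos hν) (by fun_prop)
    have ht : Tendsto (fun x : ℝ => ((Real.pi + x) ^ k * Real.exp (-(ν * x))) /
        Real.exp (-(ν/2) * x)) atTop (𝓝 0) := by
      have := bessel_poly_exp_tendsto (ν/2) (half_pos hν) k
      refine this.congr' ?_
      filter_upwards with x
      rw [mul_div_assoc, ← Real.exp_sub]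
      ring_nf
    have hlo : (fun x : ℝ => (Real.pi + x) ^ k * Real.exp (-(ν * x))) =o[atTop]
        fun x => Real.exp (-(ν/2) * x) := by
      rw [Asymptotics.isLittleO_iff_tendsto fun x hx => absurd hx (Real.exp_ne_zero _)]
      exact ht
    exact hlo.isBigO
  refine hg.mono' ?_ ?_
  · exact (Continuous.aestronglyMeasurable (by fun_prop)).restrict
  · filter_upwards [ae_restrict_mem measurableSet_Ioi] with x hx
    exact bessel_norm_le ν k (le_of_lt hx)

theorem nth_deriv_bessel_at_zero (n : ℕ) (hn : 1 ≤ n) (ν : ℝ) (hν : 0 < ν) :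
    (1 / Real.pi) *
        (∫ x in (0:ℝ)..Real.pi,
          (Complex.I * (x : ℂ)) ^ n * Complex.exp (Complex.I * ν * x)).re -
      (1 / Real.pi) *
        (∫ x in Set.Ioi (0:ℝ),
          (Complex.I * Real.pi - (x : ℂ)) ^ n *
            Complex.exp ((Complex.I * Real.pi - (x : ℂ)) * ν)).im = 0 := by
  have hc0 : ((ν : ℂ)) ≠ 0 := by exact_mod_cast hν.ne'
  -- Part 1: interval integral via FTC
  have hd1 : ∀ x : ℝ, HasDerivAt (fun y : ℝ => besselAux (ν : ℂ) n (Complex.I * y))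
      (Complex.I * ((Complex.I * x) ^ n * Complex.exp ((Complex.I * x) * ν))) x := by
    intro x
    have h1 : HasDerivAt (fun w : ℂ => besselAux (ν : ℂ) n (Complex.I * w))
        ((Complex.I * (x:ℂ)) ^ n * Complex.exp ((Complex.I * (x:ℂ)) * ν) * (Complex.I * 1))
        (x : ℂ) :=
      (besselAux_hasDerivAt (ν : ℂ) hc0 n _).comp _ ((hasDerivAt_id _).const_mul Complex.I)
    have h2 := h1.comp_ofReal
    simpa [mul_comm] using h2
  have hint1 : IntervalIntegrable
      (fun x : ℝ => Complex.I * ((Complex.I * x) ^ n * Complex.exp ((Complex.I * x) * ν)))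
      volume 0 Real.pi := by
    apply Continuous.intervalIntegrable
    fun_prop
  have hFTC : ∫ x in (0:ℝ)..Real.pi,
      Complex.I * ((Complex.I * x) ^ n * Complex.exp ((Complex.I * x) * ν)) =
      besselAux (ν : ℂ) n (Complex.I * Real.pi) - besselAux (ν : ℂ) n (Complex.I * ((0:ℝ):ℂ)) :=
    intervalIntegral.integral_eq_sub_of_hasDerivAt (fun x _ => hd1 x) hint1
  rw [intervalIntegral.integral_const_mul] at hFTC
  have hA : (∫ x in (0:ℝ)..Real.pi,
      (Complex.I * (x:ℂ)) ^ n * Complex.exp ((Complex.I * x) * ν)) =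
      -Complex.I * (besselAux (ν : ℂ) n (Complex.I * Real.pi) - besselAux (ν : ℂ) n 0) := by
    have : (∫ x in (0:ℝ)..Real.pi,
        (Complex.I * (x:ℂ)) ^ n * Complex.exp ((Complex.I * x) * ν)) =
        Complex.I⁻¹ * (Complex.I * (∫ x in (0:ℝ)..Real.pi,
          (Complex.I * (x:ℂ)) ^ n * Complex.exp ((Complex.I * x) * ν))) := by
      rw [← mul_assoc, inv_mul_cancel₀ Complex.I_ne_zero, one_mul]
    rw [this, hFTC]
    simp [Complex.inv_I]
  -- match the integrand of the statement
  have hmatch : (∫ x in (0:ℝ)..Real.pi,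
      (Complex.I * (x : ℂ)) ^ n * Complex.exp (Complex.I * ν * x)) =
      (∫ x in (0:ℝ)..Real.pi,
      (Complex.I * (x:ℂ)) ^ n * Complex.exp ((Complex.I * x) * ν)) := by
    apply intervalIntegral.integral_congr
    intro x _
    show (Complex.I * (x : ℂ)) ^ n * Complex.exp (Complex.I * ν * x) = _
    rw [show (Complex.I * (ν:ℂ) * (x:ℂ)) = (Complex.I * (x:ℂ)) * (ν:ℂ) by ring]
  -- Part 2: improper integral
  have hd2 : ∀ x : ℝ, HasDerivAt (fun y : ℝ => besselAux (ν : ℂ) n (Complex.I * Real.pi - y))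
      (-((Complex.I * Real.pi - (x:ℂ)) ^ n *
        Complex.exp ((Complex.I * Real.pi - (x:ℂ)) * ν))) x := by
    intro x
    have h1 : HasDerivAt (fun w : ℂ => besselAux (ν : ℂ) n (Complex.I * Real.pi - w))
        ((Complex.I * Real.pi - (x:ℂ)) ^ n *
          Complex.exp ((Complex.I * Real.pi - (x:ℂ)) * ν) * (-1)) (x : ℂ) :=
      (besselAux_hasDerivAt (ν : ℂ) hc0 n _).comp _ ((hasDerivAt_id _).const_sub _)
    have h2 := h1.comp_ofReal
    simpa [mul_comm] using h2
  have hint2 : IntegrableOn (fun x : ℝ =>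
      -((Complex.I * Real.pi - (x:ℂ)) ^ n *
        Complex.exp ((Complex.I * Real.pi - (x:ℂ)) * ν))) (Ioi 0) :=
    (bessel_integrable_aux ν hν n).neg
  have htend : Tendsto (fun y : ℝ => besselAux (ν : ℂ) n (Complex.I * Real.pi - y)) atTop
      (𝓝 0) := besselAux_tendsto ν hν n
  have hFTC2 : ∫ x in Ioi (0:ℝ),
      -((Complex.I * Real.pi - (x:ℂ)) ^ n *
        Complex.exp ((Complex.I * Real.pi - (x:ℂ)) * ν)) =
      0 - besselAux (ν : ℂ) n (Complex.I * Real.pi - ((0:ℝ):ℂ)) :=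
    integral_Ioi_of_hasDerivAt_of_tendsto
      (hd2 0).continuousAt.continuousWithinAt (fun x _ => hd2 x) hint2 htend
  rw [integral_neg] at hFTC2
  have hB : (∫ x in Ioi (0:ℝ),
      (Complex.I * Real.pi - (x:ℂ)) ^ n *
        Complex.exp ((Complex.I * Real.pi - (x:ℂ)) * ν)) =
      besselAux (ν : ℂ) n (Complex.I * Real.pi) := by
    have h := hFTC2
    rw [Complex.ofReal_zero, sub_zero, zero_sub, neg_inj] at h
    exact h
  obtain ⟨r, hr⟩ := besselAux_zero_real ν n
  rw [hmatch, hA, hB, hr]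
  simp only [Complex.mul_re, Complex.neg_re, Complex.neg_im, Complex.I_re, Complex.I_im,
    Complex.sub_re, Complex.sub_im, Complex.ofReal_re, Complex.ofReal_im]
  ring
end
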